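/- Let g be the 8-dimensional real nilpotent Lie algebra with complex structure J whose space of (1,0)-forms has a basis φ¹,...,φ⁴ satisfying dφ¹ = dφ² = 0, dφ³ = φ¹∧φ̄¹, dφ⁴ = φ¹∧φ². Then every 2-form of the shape ω_C = A·φ¹∧φ² + B·φ¹∧φ³ + C·φ¹∧φ⁴ + D·φ²∧φ⁴ with A,B,C,D ∈ ℂ and B·D ≠ 0 is a closed (2,0)-form satisfying ω_C ∧ ω_C ≠ 0. -/

import Mathlib

/-
STATEMENT 3: On the 8-dimensional nilpotent Lie algebra with complex structure whose
(1,0)-forms φ¹,…,φ⁴ satisfy dφ¹ = dφ² = 0, dφ³ = φ¹∧φ̄¹, dφ⁴ = φ¹∧φ², every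
ω_C = A φ¹∧φ² + B φ¹∧φ³ + C φ¹∧φ⁴ + D φ²∧φ⁴ with B·D ≠ 0 is a closed (2,0)-form
with ω_C ∧ ω_C ≠ 0.

We model the complexified Chevalley–Eilenberg algebra as the exterior algebra over ℂ
on eight generators: `gen 0,…,gen 3` are φ¹,…,φ⁴ and `gen 4,…,gen 7` are φ̄¹,…,φ̄⁴.
The differential is determined by its values `dgen` on generators (structure equations
together with their conjugates) and extended to products of two generators by the
derivation rule d(φⁱ∧φʲ) = dφⁱ∧φʲ - φⁱ∧dφʲ.
-/

noncomputable section

abbrev E := ExteriorAlgebra ℂ (Fin 8 → ℂ)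

def gen (i : Fin 8) : E := ExteriorAlgebra.ι ℂ (Pi.single i 1)

/-- structure equations: dφ¹ = dφ² = 0, dφ³ = φ¹∧φ̄¹, dφ⁴ = φ¹∧φ², plus conjugates. -/
def dgen : Fin 8 → E :=
  ![0, 0, gen 0 * gen 4, gen 0 * gen 1, 0, 0, gen 4 * gen 0, gen 4 * gen 5]

/-- d of the wedge of two generators, by the Leibniz rule. -/
def d2 (i j : Fin 8) : E := dgen i * gen j - gen i * dgen j

/-- ω_C = A φ¹∧φ² + B φ¹∧φ³ + C φ¹∧φ⁴ + D φ²∧φ⁴. -/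
def Om (A B C D : ℂ) : E :=
  A • (gen 0 * gen 1) + B • (gen 0 * gen 2) + C • (gen 0 * gen 3) + D • (gen 1 * gen 3)

/-- dω_C, computed by linearity from the Leibniz rule on monomials. -/
def dOm (A B C D : ℂ) : E := A • d2 0 1 + B • d2 0 2 + C • d2 0 3 + D • d2 1 3

lemma gen_sq (i : Fin 8) : gen i * gen i = 0 := ExteriorAlgebra.ι_sq_zero _

lemma gen_swap (i j : Fin 8) : gen j * gen i = -(gen i * gen j) := by
  have h := ExteriorAlgebra.ι_add_mul_swap (R := ℂ) (Pi.single i 1 : Fin 8 → ℂ)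
    (Pi.single j 1 : Fin 8 → ℂ)
  unfold gen
  linear_combination (norm := noncomm_ring) h

def proj : (Fin 8 → ℂ) →ₗ[ℂ] (Fin 4 → ℂ) := LinearMap.funLeft ℂ ℂ (Fin.castLE (by omega))

def F : ∀ i : ℕ, (Fin 8 → ℂ) [⋀^Fin i]→ₗ[ℂ] ℂ
  | 4 => (Matrix.detRowAlternating (R := ℂ) (n := Fin 4)).compLinearMap proj
  | _ => 0

def f : E →ₗ[ℂ] ℂ := ExteriorAlgebra.liftAlternating F

lemma prod_eq (a b c d : Fin 8) :
    gen a * gen b * gen c * gen d =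
      ExteriorAlgebra.ιMulti ℂ 4 ![Pi.single a 1, Pi.single b 1, Pi.single c 1, Pi.single d 1] := by
  simp [ExteriorAlgebra.ιMulti_apply, gen, List.ofFn_succ, mul_assoc]

lemma f_prod (a b c d : Fin 8) :
    f (gen a * gen b * gen c * gen d) =
      Matrix.det (Matrix.of fun i j : Fin 4 =>
        (![Pi.single a 1, Pi.single b 1, Pi.single c 1, Pi.single d 1] i : Fin 8 → ℂ)
          (Fin.castLE (by omega) j)) := by
  rw [prod_eq, f, ExteriorAlgebra.liftAlternating_apply_ιMulti]
  rfl

lemma fw (a b c d : Fin 8) :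
    f ((gen a * gen b) * (gen c * gen d)) =
      Matrix.det (Matrix.of fun i j : Fin 4 =>
        (![Pi.single a 1, Pi.single b 1, Pi.single c 1, Pi.single d 1] i : Fin 8 → ℂ)
          (Fin.castLE (by omega) j)) := by
  rw [← mul_assoc]; exact f_prod a b c d

set_option maxHeartbeats 2000000 in
theorem stmt3 (A B C D : ℂ) (h : B * D ≠ 0) :
    dOm A B C D = 0 ∧ Om A B C D * Om A B C D ≠ 0 := by
  constructor
  · have e02 : gen 0 * (gen 0 * gen 4) = 0 := by rw [← mul_assoc, gen_sq, zero_mul]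
    have e03 : gen 0 * (gen 0 * gen 1) = 0 := by rw [← mul_assoc, gen_sq, zero_mul]
    have e13 : gen 1 * (gen 0 * gen 1) = 0 := by
      rw [← mul_assoc, gen_swap 0 1, neg_mul, mul_assoc, gen_sq, mul_zero, neg_zero]
    simp [dOm, d2, dgen, e02, e03, e13]
  · intro h0
    apply h
    have hf := congrArg f h0
    simp only [Om, mul_add, add_mul, smul_mul_assoc, mul_smul_comm, smul_smul, map_add,
      map_smul, map_zero, fw] at hf
    simp [Matrix.det_succ_row_zero, Fin.sum_univ_succ, Pi.single_apply, show Fin.castLE (by omega) (Fin.succAbove (1:Fin 4) 2) = (3 : Fin 8) from rfl] at hf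
    linear_combination (-1/2 : ℂ) * hf
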